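/- Let Q be a set of finite positive μ-measure partitioned into finitely many measurable subsets Q_1, …, Q_s. Let b ∈ L^∞(μ) satisfy |∫_A b dμ| ≥ a μ(A) for appropriate sets A, and in particular |b(Q)| := |∫_Q b dμ| ≥ a μ(Q). Then the subcubes can be re-indexed so that, setting Q̂_k = ∪_{i=k}^{s} Q_i, one has |b(Q̂_k)| ≥ (1 − (k−1)/s) · a · μ(Q) for every k = 1, …, s. -/

import Mathlib

open MeasureTheory

/-- Averaging step: from a nonempty finite family one can remove one element so that
the norm of the remaining sum keeps a proportional amount of the total. -/
lemma stmt6_aux_step {n : ℕ} (v : Fin n → ℂ) (t : Finset (Fin n)) (ht : t.Nonempty) :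
    ∃ i ∈ t, ((t.card : ℝ) - 1) / t.card * ‖∑ j ∈ t, v j‖ ≤ ‖∑ j ∈ t, v j - v i‖ := by
  have hcard : 0 < t.card := ht.card_pos
  have key : ∑ i ∈ t, (((t.card : ℝ) - 1) / t.card * ‖∑ j ∈ t, v j‖) ≤
      ∑ i ∈ t, ‖∑ j ∈ t, v j - v i‖ := by
    have h2 : ∑ i ∈ t, (∑ j ∈ t, v j - v i) = ((t.card : ℂ) - 1) * ∑ j ∈ t, v j := by
      rw [Finset.sum_sub_distrib, Finset.sum_const, nsmul_eq_mul]; ring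
    have h1 : ‖((t.card : ℂ) - 1) * ∑ j ∈ t, v j‖ ≤ ∑ i ∈ t, ‖∑ j ∈ t, v j - v i‖ := by
      rw [← h2]; exact norm_sum_le _ _
    have h3 : ‖((t.card : ℂ) - 1)‖ = (t.card : ℝ) - 1 := by
      have : ((t.card : ℂ) - 1) = (((t.card : ℝ) - 1 : ℝ) : ℂ) := by push_cast; ring
      rw [this, Complex.norm_real, Real.norm_eq_abs, abs_of_nonneg]
      simp only [sub_nonneg]
      exact_mod_cast hcard
    rw [norm_mul, h3] at h1
    rw [Finset.sum_const, nsmul_eq_mul]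
    calc (t.card : ℝ) * (((t.card : ℝ) - 1) / t.card * ‖∑ j ∈ t, v j‖)
        = ((t.card : ℝ) - 1) * ‖∑ j ∈ t, v j‖ := by
          field_simp
      _ ≤ _ := h1
  exact Finset.exists_le_of_sum_le ht key

noncomputable def stmt6_T {n : ℕ} (v : Fin n → ℂ) : ℕ → Finset (Fin n)
  | 0 => Finset.univ
  | k + 1 =>
    let t := stmt6_T v k
    if ht : t = ∅ then t
    else t.erase (stmt6_aux_step v t (Finset.nonempty_of_ne_empty ht)).choose

noncomputable def stmt6_g {n : ℕ} (hn : 0 < n) (v : Fin n → ℂ) (k : ℕ) : Fin n :=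
  if ht : stmt6_T v k = ∅ then ⟨0, hn⟩
  else (stmt6_aux_step v (stmt6_T v k) (Finset.nonempty_of_ne_empty ht)).choose

lemma stmt6_T_succ {n : ℕ} (v : Fin n → ℂ) (k : ℕ) :
    stmt6_T v (k + 1) = if ht : stmt6_T v k = ∅ then stmt6_T v k
      else (stmt6_T v k).erase
        (stmt6_aux_step v (stmt6_T v k) (Finset.nonempty_of_ne_empty ht)).choose := by
  rw [stmt6_T]

theorem stmt6 {X : Type*} [MeasurableSpace X] (μ : Measure X)
    (s : ℕ) (hs : 0 < s) (Q : Set X) (Qs : Fin s → Set X)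
    (hmeas : ∀ i, MeasurableSet (Qs i))
    (hdisj : Pairwise fun i j => Disjoint (Qs i) (Qs j))
    (hunion : Q = ⋃ i, Qs i)
    (hfin : μ Q ≠ ⊤) (hpos : 0 < μ Q)
    (b : X → ℂ) (hb : IntegrableOn b Q μ)
    (Cb : ℝ) (hbdd : ∀ x, ‖b x‖ ≤ Cb)
    (a : ℝ) (ha : 0 < a)
    (haccr : ∀ t : Finset (Fin s),
      a * (μ (⋃ i ∈ t, Qs i)).toReal ≤ ‖∫ x in ⋃ i ∈ t, Qs i, b x ∂μ‖) :
    ∃ σ : Equiv.Perm (Fin s), ∀ k : Fin s,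
      (1 - (k : ℝ) / s) * a * (μ Q).toReal ≤
        ‖∫ x in ⋃ i ∈ Finset.univ.filter (fun i : Fin s => k ≤ i), Qs (σ i), b x ∂μ‖ := by
  classical
  set v : Fin s → ℂ := fun i => ∫ x in Qs i, b x ∂μ with hv
  -- the greedy chain of finsets
  set T : ℕ → Finset (Fin s) := stmt6_T v with hTdef
  have hT0 : T 0 = Finset.univ := by rw [hTdef, stmt6_T]
  have hTsucc : ∀ k, T (k + 1) = if ht : T k = ∅ then T k
      else (T k).erase (stmt6_aux_step v (T k) (Finset.nonempty_of_ne_empty ht)).choose :=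
    fun k => stmt6_T_succ v k
  set g : ℕ → Fin s := stmt6_g hs v with hgdef
  have hg_mem : ∀ k, (T k).Nonempty → g k ∈ T k := by
    intro k ht
    have ht' : ¬ T k = ∅ := Finset.nonempty_iff_ne_empty.mp ht
    rw [hgdef]; unfold stmt6_g; rw [dif_neg ht']
    exact (stmt6_aux_step v (T k) (Finset.nonempty_of_ne_empty ht')).choose_spec.1
  have hTg : ∀ k, (T k).Nonempty → T (k + 1) = (T k).erase (g k) := by
    intro k ht
    have ht' : ¬ T k = ∅ := Finset.nonempty_iff_ne_empty.mp ht
    rw [hTsucc k, dif_neg ht', hgdef]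
    unfold stmt6_g
    rw [dif_neg ht']
  have hstep : ∀ k, (T k).Nonempty →
      (((T k).card : ℝ) - 1) / (T k).card * ‖∑ j ∈ T k, v j‖ ≤ ‖∑ j ∈ T (k + 1), v j‖ := by
    intro k ht
    have ht' : ¬ T k = ∅ := Finset.nonempty_iff_ne_empty.mp ht
    rw [hTg k ht]
    have hg' : g k = (stmt6_aux_step v (T k) (Finset.nonempty_of_ne_empty ht')).choose := by
      rw [hgdef]; unfold stmt6_g; rw [dif_neg ht']
    rw [hg', Finset.sum_erase_eq_sub
      (stmt6_aux_step v (T k) (Finset.nonempty_of_ne_empty ht')).choose_spec.1]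
    exact (stmt6_aux_step v (T k) (Finset.nonempty_of_ne_empty ht')).choose_spec.2
  have hTsub : ∀ k, T (k + 1) ⊆ T k := by
    intro k
    by_cases ht : (T k).Nonempty
    · rw [hTg k ht]; exact Finset.erase_subset _ _
    · rw [hTsucc k, dif_pos (Finset.not_nonempty_iff_eq_empty.mp ht)]
  have hTanti : Antitone T := antitone_nat_of_succ_le hTsub
  have hcard : ∀ k, k ≤ s → (T k).card = s - k := by
    intro k
    induction k with
    | zero => intro _; simp [hT0]
    | succ k ih =>
      intro hk
      have hk' : k ≤ s := Nat.le_of_succ_le hk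
      have hck : (T k).card = s - k := ih hk'
      have hne : (T k).Nonempty := by
        rw [← Finset.card_pos, hck]
        omega
      rw [hTg k hne, Finset.card_erase_of_mem (hg_mem k hne), hck]
      omega
  have hne : ∀ k, k < s → (T k).Nonempty := by
    intro k hk
    rw [← Finset.card_pos, hcard k (le_of_lt hk)]
    omega
  have hg_not_mem : ∀ k, (T k).Nonempty → g k ∉ T (k + 1) := by
    intro k ht
    rw [hTg k ht]
    exact Finset.notMem_erase _ _
  -- the permutation
  have key : ∀ i j : Fin s, (i : ℕ) < (j : ℕ) → g (i : ℕ) ≠ g (j : ℕ) := by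
    intro i j hlt heq
    have h1 : g (j : ℕ) ∈ T (j : ℕ) := hg_mem j (hne j j.isLt)
    have h2 : T (j : ℕ) ⊆ T ((i : ℕ) + 1) := hTanti hlt
    have h3 : g (i : ℕ) ∉ T ((i : ℕ) + 1) := hg_not_mem i (hne i i.isLt)
    exact h3 (heq ▸ h2 h1)
  have hinj : Function.Injective (fun i : Fin s => g i) := by
    intro i j hij
    simp only at hij
    rcases lt_trichotomy ((i : ℕ)) ((j : ℕ)) with h | h | h
    · exact absurd hij (key i j h)
    · exact Fin.ext h
    · exact absurd hij.symm (key j i h)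
  let σ : Equiv.Perm (Fin s) :=
    Equiv.ofBijective _ (Finite.injective_iff_bijective.mp hinj)
  have hσ : ∀ i : Fin s, σ i = g i := fun i => rfl
  -- integrals over unions
  have hint : ∀ i, IntegrableOn b (Qs i) μ := by
    intro i
    apply hb.mono_set
    rw [hunion]
    exact Set.subset_iUnion Qs i
  have hIntU : ∀ t : Finset (Fin s), ∫ x in ⋃ i ∈ t, Qs i, b x ∂μ = ∑ i ∈ t, v i := by
    intro t
    exact integral_biUnion_finset t (fun i _ => hmeas i) (hdisj.set_pairwise _)
      (fun i _ => hint i)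
  have hQunion : ⋃ i ∈ (Finset.univ : Finset (Fin s)), Qs i = Q := by
    rw [hunion]; simp
  have hbase : a * (μ Q).toReal ≤ ‖∑ i, v i‖ := by
    have h := haccr Finset.univ
    rw [hIntU Finset.univ, hQunion] at h
    exact h
  have hsR : (0 : ℝ) < s := by exact_mod_cast hs
  -- main inductive bound
  have hbound : ∀ k, k ≤ s →
      ((s : ℝ) - k) / s * (a * (μ Q).toReal) ≤ ‖∑ j ∈ T k, v j‖ := by
    intro k
    induction k with
    | zero =>
      intro _
      rw [hT0]
      simpa [div_self (ne_of_gt hsR)] using hbase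
    | succ k ih =>
      intro hk
      push_cast
      have hk' : k < s := hk
      have hkk : k ≤ s := le_of_lt hk'
      have hTne : (T k).Nonempty := hne k hk'
      have hck : ((T k).card : ℝ) = (s : ℝ) - k := by
        rw [hcard k hkk]
        push_cast [Nat.cast_sub hkk]
        ring
      have hsk : (0 : ℝ) < (s : ℝ) - k := by
        have : (k : ℝ) < s := by exact_mod_cast hk'
        linarith
      have h1 := hstep k hTne
      rw [hck] at h1
      have h2 := ih hkk
      have hfac : (0 : ℝ) ≤ ((s : ℝ) - k - 1) / ((s : ℝ) - k) := by
        apply div_nonneg _ (le_of_lt hsk)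
        have : ((k : ℝ) + 1) ≤ s := by exact_mod_cast hk
        linarith
      calc ((s : ℝ) - (k + 1)) / s * (a * (μ Q).toReal)
          = ((s : ℝ) - k - 1) / ((s : ℝ) - k) * (((s : ℝ) - k) / s * (a * (μ Q).toReal)) := by
            field_simp
            ring
        _ ≤ ((s : ℝ) - k - 1) / ((s : ℝ) - k) * ‖∑ j ∈ T k, v j‖ :=
            mul_le_mul_of_nonneg_left h2 hfac
        _ ≤ ‖∑ j ∈ T (k + 1), v j‖ := h1
  -- conclusion
  refine ⟨σ, fun k => ?_⟩
  have hmem : ∀ i : Fin s, σ i ∈ T (k : ℕ) ↔ k ≤ i := by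
    intro i
    rw [hσ]
    constructor
    · intro h
      by_contra hki
      have hik : (i : ℕ) + 1 ≤ (k : ℕ) := by
        rw [Fin.le_def] at hki; omega
      exact hg_not_mem i (hne i i.isLt) (hTanti hik h)
    · intro h
      have hki : (k : ℕ) ≤ (i : ℕ) := h
      exact hTanti hki (hg_mem i (hne i i.isLt))
  have hset : ⋃ i ∈ Finset.univ.filter (fun i : Fin s => k ≤ i), Qs (σ i)
      = ⋃ j ∈ T (k : ℕ), Qs j := by
    ext x
    simp only [Set.mem_iUnion, Finset.mem_filter, Finset.mem_univ, true_and]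
    constructor
    · rintro ⟨i, hki, hx⟩
      exact ⟨σ i, (hmem i).2 hki, hx⟩
    · rintro ⟨j, hj, hx⟩
      obtain ⟨i, rfl⟩ := σ.surjective j
      exact ⟨i, (hmem i).1 hj, hx⟩
  rw [hset, hIntU (T (k : ℕ))]
  have h := hbound (k : ℕ) (le_of_lt k.isLt)
  calc (1 - (k : ℝ) / s) * a * (μ Q).toReal
      = ((s : ℝ) - k) / s * (a * (μ Q).toReal) := by
        field_simp
    _ ≤ ‖∑ j ∈ T (k : ℕ), v j‖ := h
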